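/- Theorem 5.1 (impossibility of non-trivial accuracy for all privacy valuations with monotonic privacy). Fix a number of players n ≥ 1, a mechanism M, and nonnegative privacy loss functions λ_1, …, λ_n. Suppose each λ_i respects indifference and is increasing for δ-monotonic distinguishability for some δ ≤ 1/(3n). Suppose M is individually rational; M always has finite payments, i.e., Pay_i(b,v) is finite for all (b,v) ∈ {0,1}^n × ℝ^n and all i; and M is truthful for every input (b,v) and player i with v_i = 0. Then there exists v ∈ ℝ^n such that M is not (1/2, 1/3)-accurate on both of the inputs (0^n, 0^n) and (1^n, v). -/

import Mathlib

open MeasureTheory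
open scoped ENNReal

noncomputable section

attribute [local instance] Classical.propDecidable

/-- Expectation of a real-valued function under a `PMF`. -/
def PMF.expect {α : Type*} [MeasurableSpace α] (p : PMF α) (f : α → ℝ) : ℝ :=
  ∫ x, f x ∂p.toMeasure

/-- Total variation (statistical) distance between two distributions:
`Δ(p,q) = sup_S |p(S) - q(S)|`. -/
def tvDist {α : Type*} (p q : PMF α) : ℝ :=
  ⨆ S : Set α, |(p.toOuterMeasure S).toReal - (q.toOuterMeasure S).toReal|

/-- A mechanism on `n` players: a randomized function producing an integer output
(an estimate of the sum of the data bits) together with payments to the `n` players. -/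
structure Mech (n : ℕ) where
  run : (Fin n → Bool) → (Fin n → ℝ) → PMF (ℤ × (Fin n → ℝ))

namespace Mech

variable {n : ℕ}

/-- The output part `M_out`. -/
def out (M : Mech n) (b : Fin n → Bool) (v : Fin n → ℝ) : PMF ℤ :=
  (M.run b v).map Prod.fst

/-- The payment part `M_pay`. -/
def payPMF (M : Mech n) (b : Fin n → Bool) (v : Fin n → ℝ) : PMF (Fin n → ℝ) :=
  (M.run b v).map Prod.snd

/-- `Pay_i(b,v)`: the expected payment to player `i`. -/
def pay (M : Mech n) (b : Fin n → Bool) (v : Fin n → ℝ) (i : Fin n) : ℝ :=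
  (M.payPMF b v).expect (fun p => p i)

/-- `M_{-i}`: the output together with the payments to all players other than `i`. -/
def minus (M : Mech n) (i : Fin n) (b : Fin n → Bool) (v : Fin n → ℝ) :
    PMF (ℤ × ({j : Fin n // j ≠ i} → ℝ)) :=
  (M.run b v).map (fun sp => (sp.1, fun j => sp.2 j.1))

end Mech

/-- The type of privacy loss functions `λ_i(b, v, v'_i, s, p_{-i})` for player `i`. -/
abbrev LossFn (n : ℕ) (i : Fin n) : Type :=
  (Fin n → Bool) → (Fin n → ℝ) → ℝ → ℤ → ({j : Fin n // j ≠ i} → ℝ) → ℝ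

/-- `Loss_i(b, v, v'_i)`: the expected privacy loss of player `i` with true types `(b,v)`
and declaration `v'_i`. -/
def lossOf {n : ℕ} (M : Mech n) {i : Fin n} (lam : LossFn n i)
    (b : Fin n → Bool) (v : Fin n → ℝ) (v'i : ℝ) : ℝ :=
  (M.run b (Function.update v i v'i)).expect
    (fun sp => lam b v v'i sp.1 (fun j => sp.2 j.1))

/-- `i`-neighbors: inputs agreeing in all coordinates `j ≠ i`. -/
def iNeighbor {n : ℕ} (i : Fin n) (x y : (Fin n → Bool) × (Fin n → ℝ)) : Prop :=
  ∀ j, j ≠ i → x.1 j = y.1 j ∧ x.2 j = y.2 j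

/-- Neighbors: `i`-neighbors for some `i`. -/
def Neighbor {n : ℕ} (x y : (Fin n → Bool) × (Fin n → ℝ)) : Prop :=
  ∃ i, iNeighbor i x y

/-- Monotonically related player types. -/
def monRelated (t t' : Bool × ℝ) : Prop :=
  (t.1 = false ∧ t'.1 = true ∧ t.2 ≤ t'.2) ∨ (t.1 = true ∧ t'.1 = false ∧ t'.2 ≤ t.2)

/-- Monotonic `i`-neighbors. -/
def monINeighbor {n : ℕ} (i : Fin n) (x y : (Fin n → Bool) × (Fin n → ℝ)) : Prop :=
  iNeighbor i x y ∧ monRelated (x.1 i, x.2 i) (y.1 i, y.2 i)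

/-- `(b,v)` is `δ`-distinguishable for player `i` with respect to `f`. -/
def distinguishable {n : ℕ} {α : Type*} (δ : ℝ)
    (f : (Fin n → Bool) → (Fin n → ℝ) → PMF α) (i : Fin n)
    (b : Fin n → Bool) (v : Fin n → ℝ) : Prop :=
  ∃ y : (Fin n → Bool) × (Fin n → ℝ), iNeighbor i (b, v) y ∧ δ ≤ tvDist (f b v) (f y.1 y.2)

/-- `(b,v)` is `δ`-monotonically distinguishable for player `i` with respect to `f`. -/
def monDistinguishable {n : ℕ} {α : Type*} (δ : ℝ)
    (f : (Fin n → Bool) → (Fin n → ℝ) → PMF α) (i : Fin n)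
    (b : Fin n → Bool) (v : Fin n → ℝ) : Prop :=
  ∃ y : (Fin n → Bool) × (Fin n → ℝ), monINeighbor i (b, v) y ∧ δ ≤ tvDist (f b v) (f y.1 y.2)

/-- `λ_i` respects indifference. -/
def respectsIndifference {n : ℕ} (M : Mech n) {i : Fin n} (lam : LossFn n i) : Prop :=
  ∀ b v, v i = 0 → ∀ v' v'', lossOf M lam b v v' = lossOf M lam b v v''

/-- `λ_i` is increasing for `δ`-distinguishability. -/
def increasingFor {n : ℕ} (M : Mech n) {i : Fin n} (lam : LossFn n i) (δ : ℝ) : Prop :=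
  ∃ T : ℝ → (Fin n → Bool) → ({j : Fin n // j ≠ i} → ℝ) → ℝ,
    ∀ ℓ, 0 < ℓ → ∀ (b : Fin n → Bool) (v : Fin n → ℝ),
      T ℓ b (fun j => v j.1) ≤ v i →
      distinguishable δ M.out i b v →
      ℓ < lossOf M lam b v (v i)

/-- `λ_i` is increasing for `δ`-monotonic distinguishability. -/
def increasingForMon {n : ℕ} (M : Mech n) {i : Fin n} (lam : LossFn n i) (δ : ℝ) : Prop :=
  ∃ T : ℝ → (Fin n → Bool) → ({j : Fin n // j ≠ i} → ℝ) → ℝ,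
    ∀ ℓ, 0 < ℓ → ∀ (b : Fin n → Bool) (v : Fin n → ℝ),
      T ℓ b (fun j => v j.1) ≤ v i →
      monDistinguishable δ M.out i b v →
      ℓ < lossOf M lam b v (v i)

/-- `M` is individually rational. -/
def indivRational {n : ℕ} (M : Mech n) (lam : ∀ i : Fin n, LossFn n i) : Prop :=
  ∀ b v i, lossOf M (lam i) b v (v i) ≤ M.pay b v i

/-- `M` is truthful for input `(b,v)` and player `i`. -/
def truthfulAt {n : ℕ} (M : Mech n) {i : Fin n} (lam : LossFn n i)
    (b : Fin n → Bool) (v : Fin n → ℝ) : Prop :=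
  ∀ v'i : ℝ,
    M.pay b (Function.update v i v'i) i - lossOf M lam b v v'i ≤
      M.pay b v i - lossOf M lam b v (v i)

/-- The average `b̄` of the data bits. -/
def bbar {n : ℕ} (b : Fin n → Bool) : ℝ := (∑ i, if b i then (1 : ℝ) else 0) / n

/-- `M` is `([a, a'], β)`-accurate on input `(b,v)`. -/
def accurate {n : ℕ} (M : Mech n) (a a' β : ℝ) (b : Fin n → Bool) (v : Fin n → ℝ) : Prop :=
  ((M.out b v).toOuterMeasure
      {s : ℤ | ¬((bbar b - a) * n < (s : ℝ) ∧ (s : ℝ) < (bbar b + a') * n)}).toReal ≤ β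

/-- `G` is the symmetric geometric distribution `Geom(ε)` on `ℤ`, with
`Pr[X = k] = (1-e^{-ε})/(1+e^{-ε}) · e^{-ε|k|}`. -/
def isGeom (ε : ℝ) (G : PMF ℤ) : Prop :=
  ∀ k : ℤ, G k =
    ENNReal.ofReal ((1 - Real.exp (-ε)) / (1 + Real.exp (-ε)) * Real.exp (-ε * |(k : ℝ)|))

/-- The monotonic-valuations mechanism `M_{B,ε}` (Algorithm 1): data bits of players with
`2εv_i > B/n` are treated as 0, the output is the resulting sum plus `Geom(ε)` noise, and
each player with `2εv_i ≤ B/n` is paid `B/n` (others are paid nothing). -/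
def monMech (n : ℕ) (B ε : ℝ) (G : PMF ℤ) : Mech n where
  run b v := G.map (fun x =>
    ((∑ i, if b i = true ∧ 2 * ε * v i ≤ B / n then (1 : ℤ) else 0) + x,
      fun i => if 2 * ε * v i ≤ B / n then B / n else 0))

/-- The modified mechanism `M'` of Theorem 4.3: identical to `M_{B,ε}` except that all
players with data bit 0 are paid `B/n`, even those with large privacy valuations. -/
def monMech' (n : ℕ) (B ε : ℝ) (G : PMF ℤ) : Mech n where
  run b v := G.map (fun x =>
    ((∑ i, if b i = true ∧ 2 * ε * v i ≤ B / n then (1 : ℤ) else 0) + x,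
      fun i => if 2 * ε * v i ≤ B / n ∨ b i = false then B / n else 0))

/-- The log-ratio of point probabilities of `M_{-i}` between `(b,v)` and the input where
player `i`'s type is replaced by `(b''_i, v''_i)`. -/
def logRatio {n : ℕ} (M : Mech n) (i : Fin n) (b : Fin n → Bool) (v : Fin n → ℝ)
    (b''i : Bool) (v''i : ℝ) (s : ℤ) (p : {j : Fin n // j ≠ i} → ℝ) : ℝ :=
  Real.log ((M.minus i b v (s, p)).toReal /
    (M.minus i (Function.update b i b''i) (Function.update v i v''i) (s, p)).toReal)

/-- `λ_i` is bounded by differential privacy for monotonic valuations. -/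
def boundedByDPMon {n : ℕ} (M : Mech n) {i : Fin n} (lam : LossFn n i) : Prop :=
  ∀ b v v'i s p,
    |lam b v v'i s p| ≤
      v i * ⨆ t : {t : Bool × ℝ // monRelated (b i, v i) t},
        logRatio M i b v t.1.1 t.1.2 s p

/-- `λ_i` respects identical output distributions. -/
def respectsIdentical {n : ℕ} (M : Mech n) {i : Fin n} (lam : LossFn n i) : Prop :=
  ∀ b v v'i, M.minus i b v = M.minus i b (Function.update v i v'i) →
    ∀ s p, lam b v v'i s p = lam b v (v i) s p

/-- `λ_i` is growing with statistical distance for monotonic neighbors. -/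
def growingMon {n : ℕ} (M : Mech n) {i : Fin n} (lam : LossFn n i) : Prop :=
  ∀ b v y, monINeighbor i (b, v) y →
    v i * tvDist (M.out b v) (M.out y.1 y.2) ≤ lossOf M lam b v (v i)


section AuxForProof

open MeasureTheory

private lemma aux_mZ (S : Set ℤ) : MeasurableSet S := MeasurableSpace.measurableSet_top

private lemma aux_om_eq (p : PMF ℤ) (S : Set ℤ) : p.toOuterMeasure S = p.toMeasure S :=
  (p.toMeasure_apply_eq_toOuterMeasure_apply (aux_mZ S)).symm

private lemma aux_le_one (p : PMF ℤ) (S : Set ℤ) : (p.toOuterMeasure S).toReal ≤ 1 := by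
  rw [aux_om_eq]
  have h := prob_le_one (μ := p.toMeasure) (s := S)
  have := ENNReal.toReal_mono (by simp) h
  simpa using this

private lemma tv_bdd (p q : PMF ℤ) : BddAbove (Set.range fun S : Set ℤ =>
    |(p.toOuterMeasure S).toReal - (q.toOuterMeasure S).toReal|) := by
  refine ⟨2, ?_⟩
  rintro x ⟨S, rfl⟩
  have h1 := aux_le_one p S
  have h2 := aux_le_one q S
  have h3 : (0:ℝ) ≤ (p.toOuterMeasure S).toReal := ENNReal.toReal_nonneg
  have h4 : (0:ℝ) ≤ (q.toOuterMeasure S).toReal := ENNReal.toReal_nonneg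
  rw [abs_le]
  constructor <;> linarith

private lemma tv_le (p q : PMF ℤ) (S : Set ℤ) :
    |(p.toOuterMeasure S).toReal - (q.toOuterMeasure S).toReal| ≤ tvDist p q :=
  le_ciSup (tv_bdd p q) S

private lemma tv_nonneg (p q : PMF ℤ) : 0 ≤ tvDist p q :=
  (abs_nonneg _).trans (tv_le p q ∅)

private lemma tv_symm (p q : PMF ℤ) : tvDist p q = tvDist q p := by
  apply le_antisymm
  · apply ciSup_le
    intro S
    rw [abs_sub_comm]
    exact tv_le q p S
  · apply ciSup_le
    intro S
    rw [abs_sub_comm]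
    exact tv_le p q S

private lemma tv_self (p : PMF ℤ) : tvDist p p = 0 := by
  have h : (fun S : Set ℤ =>
      |(p.toOuterMeasure S).toReal - (p.toOuterMeasure S).toReal|) = fun _ => (0:ℝ) := by
    funext S; simp
  rw [tvDist, h, ciSup_const]

private lemma tv_triangle (p q r : PMF ℤ) : tvDist p r ≤ tvDist p q + tvDist q r := by
  apply ciSup_le
  intro S
  calc |(p.toOuterMeasure S).toReal - (r.toOuterMeasure S).toReal|
      ≤ |(p.toOuterMeasure S).toReal - (q.toOuterMeasure S).toReal| +
        |(q.toOuterMeasure S).toReal - (r.toOuterMeasure S).toReal| := abs_sub_le _ _ _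
    _ ≤ tvDist p q + tvDist q r := add_le_add (tv_le p q S) (tv_le q r S)

private lemma tv_chain (g : ℕ → PMF ℤ) (m : ℕ) :
    tvDist (g 0) (g m) ≤ ∑ k ∈ Finset.range m, tvDist (g k) (g (k+1)) := by
  induction m with
  | zero => simp [tv_self]
  | succ m ih =>
      rw [Finset.sum_range_succ]
      exact (tv_triangle _ _ _).trans (add_le_add ih le_rfl)

/-- A fixpoint combinator for sequences defined by strong recursion. -/
private noncomputable def buildVec (f : ℕ → (ℕ → ℝ) → ℝ) : ℕ → ℝ
  | k => f k (fun m => if h : m < k then buildVec f m else 0)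
  termination_by k => k

private lemma exists_fix (f : ℕ → (ℕ → ℝ) → ℝ) :
    ∃ g : ℕ → ℝ, ∀ k, g k = f k (fun m => if m < k then g m else 0) := by
  refine ⟨buildVec f, fun k => ?_⟩
  conv_lhs => rw [buildVec]
  congr 1

private lemma aux_tv_lower {n : ℕ} (hn : 1 ≤ n) (M : Mech n) (v : Fin n → ℝ)
    (h0 : accurate M (1/2) (1/2) (1/3) (fun _ => false) (fun _ => 0))
    (h1 : accurate M (1/2) (1/2) (1/3) (fun _ => true) v) :
    1/3 ≤ tvDist (M.out (fun _ => false) (fun _ => 0)) (M.out (fun _ => true) v) := by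
  have hn0 : (0:ℝ) < n := by exact_mod_cast Nat.lt_of_lt_of_le Nat.zero_lt_one hn
  have hb0 : bbar (fun _ : Fin n => false) = 0 := by simp [bbar]
  have hb1 : bbar (fun _ : Fin n => true) = 1 := by
    simp [bbar, Finset.card_univ]
    omega
  rw [accurate, hb0] at h0
  rw [accurate, hb1] at h1
  set p := M.out (fun _ : Fin n => false) (fun _ => 0) with hp
  set q := M.out (fun _ : Fin n => true) v with hq
  set S1 : Set ℤ := {s : ℤ | ¬(((1:ℝ) - 1/2) * n < (s:ℝ) ∧ (s:ℝ) < ((1:ℝ) + 1/2) * n)} with hS1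
  set S0 : Set ℤ := {s : ℤ | ¬(((0:ℝ) - 1/2) * n < (s:ℝ) ∧ (s:ℝ) < ((0:ℝ) + 1/2) * n)} with hS0
  have hsub : S1ᶜ ⊆ S0 := by
    intro s hs
    simp only [hS1, Set.mem_compl_iff, Set.mem_setOf_eq, not_not] at hs
    simp only [hS0, Set.mem_setOf_eq]
    intro hcontra
    have := hs.1
    have := hcontra.2
    linarith
  have h0c : (p.toMeasure S1ᶜ).toReal ≤ 1/3 := by
    rw [aux_om_eq] at h0
    exact le_trans (ENNReal.toReal_mono (measure_ne_top _ _) (measure_mono hsub)) h0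
  have hsum : (p.toMeasure S1).toReal + (p.toMeasure S1ᶜ).toReal = 1 := by
    rw [← ENNReal.toReal_add (measure_ne_top _ _) (measure_ne_top _ _),
      measure_add_measure_compl (aux_mZ _)]
    simp
  have key := tv_le p q S1
  rw [aux_om_eq, aux_om_eq] at key
  rw [aux_om_eq] at h1
  have : 1/3 ≤ (p.toMeasure S1).toReal - (q.toMeasure S1).toReal := by linarith
  exact le_trans (this.trans (le_abs_self _)) key

end AuxForProof

/-- **Theorem 5.1 (impossibility of non-trivial accuracy for all privacy valuations
with monotonic privacy).** -/
theorem monotonic_impossibility (n : ℕ) (hn : 1 ≤ n) (M : Mech n)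
    (lam : ∀ i : Fin n, LossFn n i)
    (hnonneg : ∀ (i : Fin n) b v v'i s p, 0 ≤ lam i b v v'i s p)
    (δ : ℝ) (hδ : δ ≤ 1 / (3 * n))
    (hindiff : ∀ i : Fin n, respectsIndifference M (lam i))
    (hincr : ∀ i : Fin n, increasingForMon M (lam i) δ)
    (hIR : indivRational M lam)
    (hfin : ∀ (b : Fin n → Bool) (v : Fin n → ℝ) (i : Fin n),
      Integrable (fun p => p i) ((M.payPMF b v).toMeasure))
    (htruth : ∀ (b : Fin n → Bool) (v : Fin n → ℝ) (i : Fin n), v i = 0 →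
      truthfulAt M (lam i) b v) :
    ∃ v : Fin n → ℝ,
      ¬ (accurate M (1/2) (1/2) (1/3) (fun _ => false) (fun _ => 0) ∧
         accurate M (1/2) (1/2) (1/3) (fun _ => true) v) := by
  by_contra hcon
  push_neg at hcon
  -- hcon : ∀ v, accurate ... ∧ accurate ...
  set bf : ℕ → Fin n → Bool := fun k m => decide (m.1 < k) with hbf
  set F : ℕ → (ℕ → ℝ) → ℝ := fun k prev =>
    if h : k < n then
      max 0 (Classical.choose (hincr ⟨k, h⟩)
        (|M.pay (bf (k+1)) (fun m : Fin n => prev m.1) ⟨k, h⟩| + 1)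
        (bf (k+1))
        (fun j : {j : Fin n // j ≠ ⟨k, h⟩} => prev j.1.1))
    else 0 with hF
  obtain ⟨g, hg⟩ := exists_fix F
  set vf : ℕ → Fin n → ℝ := fun k m => if m.1 < k then g m.1 else 0 with hvf
  have hgood : ∀ i : Fin n, g i.1 =
      max 0 (Classical.choose (hincr i)
        (|M.pay (bf (i.1+1)) (vf i.1) i| + 1) (bf (i.1+1))
        (fun j : {j : Fin n // j ≠ i} => vf i.1 j.1)) := by
    intro i
    rw [hg i.1]
    simp only [hF]
    rw [dif_pos i.2]
  have hgnn : ∀ i : Fin n, 0 ≤ g i.1 := by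
    intro i
    rw [hgood i]
    exact le_max_left _ _
  -- the key step bound
  have hstep : ∀ i : Fin n,
      tvDist (M.out (bf i.1) (vf i.1)) (M.out (bf (i.1+1)) (vf (i.1+1))) < δ := by
    intro i
    by_contra hge
    push_neg at hge
    have hw0 : vf i.1 i = 0 := by simp [hvf]
    have hvfull : vf (i.1+1) = Function.update (vf i.1) i (g i.1) := by
      funext m
      rcases eq_or_ne m i with rfl | hm
      · simp [hvf]
      · have hmk : m.1 ≠ i.1 := fun h => hm (Fin.ext h)
        rw [Function.update_of_ne hm]
        simp only [hvf]
        have hiff : (m.1 < i.1 + 1) ↔ (m.1 < i.1) := by omega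
        rw [if_congr hiff rfl rfl]
    have hfulli : vf (i.1+1) i = g i.1 := by simp [hvf]
    have hmon : monDistinguishable δ M.out i (bf (i.1+1)) (vf (i.1+1)) := by
      refine ⟨(bf i.1, vf i.1), ⟨?_, ?_⟩, ?_⟩
      · intro j hj
        have hjk : j.1 ≠ i.1 := fun h => hj (Fin.ext h)
        constructor
        · simp only [hbf, decide_eq_decide]
          omega
        · simp only [hvf]
          have hiff : (j.1 < i.1 + 1) ↔ (j.1 < i.1) := by omega
          rw [if_congr hiff rfl rfl]
      · right
        refine ⟨?_, ?_, ?_⟩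
        · simp [hbf]
        · simp [hbf]
        · show vf i.1 i ≤ vf (i.1+1) i
          rw [hw0, hfulli]
          exact hgnn i
      · rw [tv_symm]
        exact hge
    have hTle : Classical.choose (hincr i) (|M.pay (bf (i.1+1)) (vf i.1) i| + 1)
        (bf (i.1+1)) (fun j : {j : Fin n // j ≠ i} => vf (i.1+1) j.1) ≤ vf (i.1+1) i := by
      have heq : (fun j : {j : Fin n // j ≠ i} => vf (i.1+1) j.1) =
          fun j : {j : Fin n // j ≠ i} => vf i.1 j.1 := by
        funext j
        have hjk : j.1.1 ≠ i.1 := fun h => j.2 (Fin.ext h)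
        simp only [hvf]
        have hiff : (j.1.1 < i.1 + 1) ↔ (j.1.1 < i.1) := by omega
        rw [if_congr hiff rfl rfl]
      rw [heq, hfulli, hgood i]
      exact le_max_right _ _
    have hpos : (0:ℝ) < |M.pay (bf (i.1+1)) (vf i.1) i| + 1 := by positivity
    have h1 := Classical.choose_spec (hincr i) (|M.pay (bf (i.1+1)) (vf i.1) i| + 1)
      hpos (bf (i.1+1)) (vf (i.1+1)) hTle hmon
    have h2 := hIR (bf (i.1+1)) (vf (i.1+1)) i
    have h3 := htruth (bf (i.1+1)) (vf i.1) i hw0 (g i.1)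
    have h4 := hindiff i (bf (i.1+1)) (vf i.1) hw0 (g i.1) (vf i.1 i)
    rw [← hvfull] at h3
    rw [hfulli] at h1
    rw [hfulli] at h2
    have h6 : M.pay (bf (i.1+1)) (vf i.1) i ≤ |M.pay (bf (i.1+1)) (vf i.1) i| :=
      le_abs_self _
    linarith
  -- telescoping
  have hn0 : (0:ℝ) < n := by exact_mod_cast Nat.lt_of_lt_of_le Nat.zero_lt_one hn
  have htel : tvDist (M.out (bf 0) (vf 0)) (M.out (bf n) (vf n)) < 1/3 := by
    have hne : (Finset.range n).Nonempty := ⟨0, by simp; omega⟩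
    calc tvDist (M.out (bf 0) (vf 0)) (M.out (bf n) (vf n))
        ≤ ∑ k ∈ Finset.range n,
            tvDist (M.out (bf k) (vf k)) (M.out (bf (k+1)) (vf (k+1))) :=
          tv_chain (fun k => M.out (bf k) (vf k)) n
      _ < ∑ _k ∈ Finset.range n, δ := by
          apply Finset.sum_lt_sum_of_nonempty hne
          intro k hk
          exact hstep ⟨k, Finset.mem_range.1 hk⟩
      _ = n * δ := by simp [mul_comm]
      _ ≤ n * (1 / (3 * n)) := by
          apply mul_le_mul_of_nonneg_left hδ hn0.le
      _ = 1/3 := by field_simp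
  -- accuracy gives a lower bound
  obtain ⟨acc0, acc1⟩ := hcon (vf n)
  have hlow := aux_tv_lower hn M (vf n) acc0 acc1
  have hb0 : bf 0 = (fun _ : Fin n => false) := by funext m; simp [hbf]
  have hv0 : vf 0 = (fun _ : Fin n => (0:ℝ)) := by funext m; simp [hvf]
  have hbn : bf n = (fun _ : Fin n => true) := by funext m; simp [hbf, m.2]
  rw [hb0, hv0, hbn] at htel
  linarith
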